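/- Let m be a basic probability assignment on a finite nonempty set Θ with 0 < k_Bel < 1. Then the intersection probability is an affine combination of the relative belief and the relative plausibility of singletons: for every x ∈ Θ, p[Bel](x) = (1 − β[Bel])·k_Bel·(m(x)/k_Bel) + β[Bel]·k_Pl·(Pl(x)/k_Pl), and the two coefficients sum to one: (1 − β[Bel])·k_Bel + β[Bel]·k_Pl = 1. Hence p[Bel] lies on the line joining the relative belief of singletons and the relative plausibility of singletons. -/
import Mathlib


open Finset

/-- A basic probability assignment on a finite set `Θ`. -/
def IsBPA {Θ : Type*} [Fintype Θ] (m : Finset Θ → ℝ) : Prop :=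
  m ∅ = 0 ∧ (∀ A, 0 ≤ m A) ∧ (∑ A : Finset Θ, m A) = 1

/-- Belief function `Bel(A) = ∑_{B ⊆ A} m(B)`. -/
noncomputable def Bel {Θ : Type*} [Fintype Θ] [DecidableEq Θ] (m : Finset Θ → ℝ)
    (A : Finset Θ) : ℝ :=
  ∑ B ∈ A.powerset, m B

/-- Plausibility function `Pl(A) = ∑_{B ∩ A ≠ ∅} m(B)`. -/
noncomputable def Pl {Θ : Type*} [Fintype Θ] [DecidableEq Θ] (m : Finset Θ → ℝ)
    (A : Finset Θ) : ℝ :=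
  ∑ B ∈ Finset.univ.filter (fun B => B ∩ A ≠ ∅), m B

/-- Total mass of singletons `k_Bel`. -/
noncomputable def kBel {Θ : Type*} [Fintype Θ] (m : Finset Θ → ℝ) : ℝ :=
  ∑ x : Θ, m {x}

/-- Total plausibility of singletons `k_Pl`. -/
noncomputable def kPl {Θ : Type*} [Fintype Θ] [DecidableEq Θ] (m : Finset Θ → ℝ) : ℝ :=
  ∑ x : Θ, Pl m {x}

/-- `β[Bel] = (1 - k_Bel)/(k_Pl - k_Bel)`. -/
noncomputable def betaBel {Θ : Type*} [Fintype Θ] [DecidableEq Θ] (m : Finset Θ → ℝ) : ℝ :=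
  (1 - kBel m) / (kPl m - kBel m)

/-- The intersection probability `p[Bel](x) = m(x) + β[Bel]⬝(Pl(x) - m(x))`. -/
noncomputable def pInt {Θ : Type*} [Fintype Θ] [DecidableEq Θ] (m : Finset Θ → ℝ)
    (x : Θ) : ℝ :=
  m {x} + betaBel m * (Pl m {x} - m {x})

/-- the intersection probability is the affine combination of the relative
belief of singletons `m(x)/k_Bel` and the relative plausibility of singletons `Pl(x)/k_Pl`
with coefficients `(1 - β[Bel])⬝k_Bel` and `β[Bel]⬝k_Pl`, which sum to one; hence `p[Bel]`
lies on the line joining the two relative transforms. -/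

lemma kPl_eq_sum_card {Θ : Type*} [Fintype Θ] [DecidableEq Θ] (m : Finset Θ → ℝ) :
    kPl m = ∑ B : Finset Θ, (B.card : ℝ) * m B := by
  unfold kPl Pl
  simp_rw [Finset.sum_filter]
  rw [Finset.sum_comm]
  refine Finset.sum_congr rfl fun B _ => ?_
  have : ∀ x : Θ, (B ∩ {x} ≠ ∅) ↔ x ∈ B := by
    intro x
    rw [← Finset.nonempty_iff_ne_empty]
    constructor
    · rintro ⟨y, hy⟩
      simp only [Finset.mem_inter, Finset.mem_singleton] at hy
      exact hy.2 ▸ hy.1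
    · intro h
      exact ⟨x, Finset.mem_inter.mpr ⟨h, Finset.mem_singleton_self x⟩⟩
  simp_rw [this]
  rw [Finset.sum_ite_mem, Finset.univ_inter, Finset.sum_const, nsmul_eq_mul]

lemma one_le_kPl {Θ : Type*} [Fintype Θ] [DecidableEq Θ] (m : Finset Θ → ℝ)
    (hm : IsBPA m) : 1 ≤ kPl m := by
  obtain ⟨he, hn, hs⟩ := hm
  rw [kPl_eq_sum_card, ← hs]
  refine Finset.sum_le_sum fun B _ => ?_
  rcases eq_or_ne B ∅ with rfl | hB
  · simp [he]
  · have : (1 : ℝ) ≤ B.card := by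
      exact_mod_cast Finset.card_pos.mpr (Finset.nonempty_iff_ne_empty.mpr hB)
    nlinarith [hn B]

theorem pInt_affine_combination_relBel_relPl
    {Θ : Type*} [Fintype Θ] [DecidableEq Θ] [Nonempty Θ] (m : Finset Θ → ℝ)
    (hm : IsBPA m) (h0 : 0 < kBel m) (h1 : kBel m < 1) :
    (∀ x : Θ, pInt m x =
      (1 - betaBel m) * kBel m * (m {x} / kBel m) +
        betaBel m * kPl m * (Pl m {x} / kPl m)) ∧
    (1 - betaBel m) * kBel m + betaBel m * kPl m = 1 := by
  have hK : 1 ≤ kPl m := one_le_kPl m hm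
  have hd : kPl m - kBel m ≠ 0 := by linarith
  have hb : betaBel m * (kPl m - kBel m) = 1 - kBel m := by
    rw [betaBel, div_mul_cancel₀ _ hd]
  constructor
  · intro x
    rw [pInt]
    have hk0 : kBel m ≠ 0 := ne_of_gt h0
    have hK0 : kPl m ≠ 0 := by linarith
    field_simp
    ring
  · linear_combination hb
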